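/- arXiv:1109.2694 — 2 statements merged into one kernel-verified Lean document; each statement's English description precedes it below -/
import Mathlib

section
/- Let $(r(m))_{m\geq 1}$ be a nonincreasing sequence of nonnegative reals converging to 0, and let $(b_n)$ be a sequence of positive reals with $b_n \to 0$. Define $v_n = \lfloor b_n^{-1/(2d)} \rfloor$ and $m_n = \max\{v_n, \lfloor (r(v_n)/b_n^3)^{1/(3d)} \rfloor + 1\}$ for a fixed positive integer $d$. Then $m_n \to \infty$, $m_n^d b_n \to 0$, and $r(m_n)/(m_n^d b_n)^{3/2} \to 0$ as $n \to \infty$. -/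
open Filter Real Topology

/-- Lemma 2 of the paper (spatial version of Bosq–Merlevède–Peligrad). -/
theorem stmt0 (d : ℕ) (hd : 1 ≤ d) (r : ℕ → ℝ) (b : ℕ → ℝ)
    (hr_nonneg : ∀ m, 0 ≤ r m) (hr_anti : ∀ m m', m ≤ m' → r m' ≤ r m)
    (hr_lim : Tendsto r atTop (nhds 0))
    (hb_pos : ∀ n, 0 < b n) (hb_lim : Tendsto b atTop (nhds 0))
    (v : ℕ → ℕ) (hv : ∀ n, v n = ⌊(b n) ^ (-(1 / (2 * (d : ℝ))))⌋₊)
    (m : ℕ → ℕ)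
    (hm : ∀ n, m n = max (v n) (⌊(r (v n) / (b n) ^ (3 : ℕ)) ^ (1 / (3 * (d : ℝ)))⌋₊ + 1)) :
    Tendsto m atTop atTop ∧
    Tendsto (fun n => (m n : ℝ) ^ d * b n) atTop (nhds 0) ∧
    Tendsto (fun n => r (m n) / ((m n : ℝ) ^ d * b n) ^ ((3 : ℝ) / 2)) atTop (nhds 0) := by
  have hd0 : (d : ℝ) ≠ 0 := Nat.cast_ne_zero.mpr (by omega)
  have hc : (0:ℝ) < 1 / (2 * (d:ℝ)) := by positivity
  -- v tends to infinity
  have hbv : Tendsto (fun n => (b n) ^ (-(1 / (2 * (d:ℝ))))) atTop atTop := by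
    have h1 : Tendsto (fun n => (b n) ^ (1 / (2 * (d:ℝ)))) atTop (nhdsWithin 0 (Set.Ioi 0)) := by
      apply tendsto_nhdsWithin_of_tendsto_nhds_of_eventually_within
      · have h := hb_lim.rpow_const (p := 1 / (2 * (d:ℝ))) (Or.inr hc.le)
        rwa [Real.zero_rpow (ne_of_gt hc)] at h
      · filter_upwards with n
        exact Real.rpow_pos_of_pos (hb_pos n) _
    have h2 := tendsto_inv_nhdsGT_zero.comp h1
    refine h2.congr fun n => ?_
    simp [Real.rpow_neg (hb_pos n).le]
  have hv_top : Tendsto v atTop atTop := by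
    have := tendsto_nat_floor_atTop.comp hbv
    refine this.congr fun n => (hv n).symm
  have hm_top : Tendsto m atTop atTop :=
    tendsto_atTop_mono (fun n => by rw [hm n]; exact le_max_left _ _) hv_top
  have hrv : Tendsto (fun n => r (v n)) atTop (𝓝 0) := hr_lim.comp hv_top
  -- pointwise bound for claim 2
  have hbound2 : ∀ n, (m n:ℝ)^d * b n ≤
      b n ^ ((1:ℝ)/2) + 2^d * ((r (v n)) ^ ((1:ℝ)/3) + b n) := by
    intro n
    have hb0 := hb_pos n
    set y : ℝ := r (v n) / (b n)^(3:ℕ) with hy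
    have hy0 : 0 ≤ y := div_nonneg (hr_nonneg _) (by positivity)
    set x : ℝ := y ^ (1/(3*(d:ℝ))) with hx
    have hx0 : 0 ≤ x := Real.rpow_nonneg hy0 _
    have hmn : (m n : ℝ) = max (v n : ℝ) ((⌊x⌋₊ : ℝ) + 1) := by
      rw [hm n, Nat.cast_max, Nat.cast_add, Nat.cast_one]
    have hsplit : (m n:ℝ)^d ≤ (v n:ℝ)^d + ((⌊x⌋₊:ℝ)+1)^d := by
      rw [hmn]
      rcases max_cases (v n : ℝ) ((⌊x⌋₊:ℝ)+1) with ⟨h, _⟩ | ⟨h, _⟩ <;> rw [h]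
      · have : (0:ℝ) ≤ ((⌊x⌋₊:ℝ)+1)^d := by positivity
        linarith
      · have : (0:ℝ) ≤ (v n:ℝ)^d := by positivity
        linarith
    have termA : (v n:ℝ)^d * b n ≤ b n ^ ((1:ℝ)/2) := by
      have hA : (v n:ℝ) ≤ (b n) ^ (-(1/(2*(d:ℝ)))) := by
        rw [hv n]; exact Nat.floor_le (Real.rpow_nonneg hb0.le _)
      have h1 : (v n:ℝ)^d ≤ ((b n) ^ (-(1/(2*(d:ℝ)))))^d :=
        pow_le_pow_left₀ (Nat.cast_nonneg _) hA d
      have h2 : ((b n) ^ (-(1/(2*(d:ℝ)))))^d = (b n) ^ (-(1/2) : ℝ) := by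
        rw [← Real.rpow_natCast ((b n) ^ (-(1/(2*(d:ℝ))))) d, ← Real.rpow_mul hb0.le]
        congr 1
        field_simp
      have h3 : (b n)^(-(1/2):ℝ) * b n = b n ^ ((1:ℝ)/2) := by
        nth_rewrite 2 [← Real.rpow_one (b n)]
        rw [← Real.rpow_add hb0]
        norm_num
      calc (v n:ℝ)^d * b n ≤ (b n)^(-(1/2):ℝ) * b n := by
            rw [← h2]; exact mul_le_mul_of_nonneg_right h1 hb0.le
        _ = b n ^ ((1:ℝ)/2) := h3
    have hxd : x^d * b n = r (v n) ^ ((1:ℝ)/3) := by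
      have he : 1/(3*(d:ℝ)) * (d:ℝ) = 1/3 := by field_simp
      have hxy : x ^ d = y ^ ((1:ℝ)/3) := by
        rw [hx, ← Real.rpow_natCast (y ^ (1/(3*(d:ℝ)))) d, ← Real.rpow_mul hy0, he]
      have hb3 : ((b n)^(3:ℕ)) ^ ((1:ℝ)/3) = b n := by
        rw [← Real.rpow_natCast (b n) 3, ← Real.rpow_mul hb0.le]
        norm_num
      rw [hxy, hy, Real.div_rpow (hr_nonneg _) (by positivity), hb3,
        div_mul_cancel₀ _ (ne_of_gt hb0)]
    have termB : ((⌊x⌋₊:ℝ)+1)^d * b n ≤ 2^d * (r (v n) ^ ((1:ℝ)/3) + b n) := by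
      have h1 : (⌊x⌋₊:ℝ)+1 ≤ x + 1 := by
        have := Nat.floor_le hx0; linarith
      have h2 : ((⌊x⌋₊:ℝ)+1)^d ≤ (x+1)^d := pow_le_pow_left₀ (by positivity) h1 d
      have h3 : (x+1)^d ≤ 2^d * (x^d + 1) := by
        have hmax : x + 1 ≤ 2 * max x 1 := by
          rcases le_total x 1 with h|h
          · rw [max_eq_right h]; linarith
          · rw [max_eq_left h]; linarith
        calc (x+1)^d ≤ (2*max x 1)^d := pow_le_pow_left₀ (by positivity) hmax d
          _ = 2^d * (max x 1)^d := mul_pow 2 (max x 1) d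
          _ ≤ 2^d * (x^d + 1) := by
              have : (max x 1)^d ≤ x^d + 1 := by
                rcases max_cases x 1 with ⟨h, _⟩ | ⟨h, _⟩ <;> rw [h]
                · linarith
                · have : (0:ℝ) ≤ x^d := by positivity
                  simp only [one_pow]; linarith
              have h20 : (0:ℝ) ≤ 2^d := by positivity
              exact mul_le_mul_of_nonneg_left this h20
      calc ((⌊x⌋₊:ℝ)+1)^d * b n ≤ (2^d * (x^d + 1)) * b n := by
            exact mul_le_mul_of_nonneg_right (le_trans h2 h3) hb0.le
        _ = 2^d * (x^d * b n + b n) := by ring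
        _ = 2^d * (r (v n) ^ ((1:ℝ)/3) + b n) := by rw [hxd]
    calc (m n:ℝ)^d * b n ≤ ((v n:ℝ)^d + ((⌊x⌋₊:ℝ)+1)^d) * b n :=
          mul_le_mul_of_nonneg_right hsplit hb0.le
      _ = (v n:ℝ)^d * b n + ((⌊x⌋₊:ℝ)+1)^d * b n := by ring
      _ ≤ b n ^ ((1:ℝ)/2) + 2^d * (r (v n) ^ ((1:ℝ)/3) + b n) := add_le_add termA termB
  -- the majorant tends to 0
  have hg : Tendsto (fun n => b n ^ ((1:ℝ)/2) + 2^d * ((r (v n)) ^ ((1:ℝ)/3) + b n))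
      atTop (𝓝 0) := by
    have h1 : Tendsto (fun n => b n ^ ((1:ℝ)/2)) atTop (𝓝 0) := by
      have h := hb_lim.rpow_const (p := (1:ℝ)/2) (Or.inr (by norm_num))
      rwa [Real.zero_rpow (by norm_num : (1:ℝ)/2 ≠ 0)] at h
    have h2 : Tendsto (fun n => r (v n) ^ ((1:ℝ)/3)) atTop (𝓝 0) := by
      have h := hrv.rpow_const (p := (1:ℝ)/3) (Or.inr (by norm_num))
      rwa [Real.zero_rpow (by norm_num : (1:ℝ)/3 ≠ 0)] at h
    have := h1.add ((h2.add hb_lim).const_mul ((2:ℝ)^d))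
    simpa using this
  have claim2 : Tendsto (fun n => (m n : ℝ) ^ d * b n) atTop (𝓝 0) :=
    squeeze_zero (fun n => mul_nonneg (pow_nonneg (Nat.cast_nonneg _) d) (hb_pos n).le)
      hbound2 hg
  -- pointwise bound for claim 3
  have hbound3 : ∀ n, r (m n) / ((m n:ℝ)^d * b n) ^ ((3:ℝ)/2) ≤ r (v n) ^ ((1:ℝ)/2) := by
    intro n
    have hb0 := hb_pos n
    set y : ℝ := r (v n) / (b n)^(3:ℕ) with hy
    have hy0 : 0 ≤ y := div_nonneg (hr_nonneg _) (by positivity)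
    set x : ℝ := y ^ (1/(3*(d:ℝ))) with hx
    have hx0 : 0 ≤ x := Real.rpow_nonneg hy0 _
    have hm1 : 1 ≤ m n := by
      rw [hm n]; exact le_max_of_le_right (by omega)
    have hM0 : (0:ℝ) < (m n : ℝ) := by exact_mod_cast hm1
    have hxM : x < (m n : ℝ) := by
      have h1 : x < (⌊x⌋₊ : ℝ) + 1 := Nat.lt_floor_add_one x
      have h2 : (⌊x⌋₊ + 1 : ℕ) ≤ m n := by rw [hm n]; exact le_max_right _ _
      calc x < (⌊x⌋₊:ℝ)+1 := h1
        _ ≤ (m n : ℝ) := by exact_mod_cast h2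
    have hkey : r (v n) < (m n:ℝ)^(3*d) * (b n)^(3:ℕ) := by
      have hx3d : x ^ (3*d) = y := by
        rw [hx, ← Real.rpow_natCast (y ^ (1/(3*(d:ℝ)))) (3*d), ← Real.rpow_mul hy0]
        have he : 1/(3*(d:ℝ)) * ((3*d:ℕ):ℝ) = 1 := by push_cast; field_simp
        rw [he, Real.rpow_one]
      have h1 : x ^ (3*d) < (m n:ℝ)^(3*d) := pow_lt_pow_left₀ hxM hx0 (by omega)
      have h2 : y * (b n)^(3:ℕ) = r (v n) := by
        rw [hy]; field_simp
      have hb3 : (0:ℝ) < (b n)^(3:ℕ) := by positivity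
      nlinarith [hx3d, h1, h2]
    have hD : ((m n:ℝ)^d * b n) ^ ((3:ℝ)/2) = ((m n:ℝ)^(3*d) * (b n)^(3:ℕ)) ^ ((1:ℝ)/2) := by
      have hz0 : (0:ℝ) ≤ (m n:ℝ)^d * b n := by positivity
      have h1 : (m n:ℝ)^(3*d) * (b n)^(3:ℕ) = ((m n:ℝ)^d * b n)^(3:ℕ) := by
        rw [mul_pow, ← pow_mul]; ring_nf
      rw [h1, ← Real.rpow_natCast ((m n:ℝ)^d * b n) 3, ← Real.rpow_mul hz0]
      norm_num
    rw [hD]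
    have hDpos : 0 < ((m n:ℝ)^(3*d) * (b n)^(3:ℕ)) ^ ((1:ℝ)/2) :=
      Real.rpow_pos_of_pos (by positivity) _
    rw [div_le_iff₀ hDpos]
    have step1 : r (m n) ≤ r (v n) := hr_anti _ _ (by rw [hm n]; exact le_max_left _ _)
    have step2 : r (v n) ^ ((1:ℝ)/2) * r (v n) ^ ((1:ℝ)/2) = r (v n) := by
      rw [← Real.rpow_add' (hr_nonneg _) (by norm_num : (1:ℝ)/2 + 1/2 ≠ 0)]
      norm_num
    have step3 : r (v n) ^ ((1:ℝ)/2) ≤ ((m n:ℝ)^(3*d) * (b n)^(3:ℕ)) ^ ((1:ℝ)/2) :=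
      Real.rpow_le_rpow (hr_nonneg _) hkey.le (by norm_num)
    calc r (m n) ≤ r (v n) := step1
      _ = r (v n) ^ ((1:ℝ)/2) * r (v n) ^ ((1:ℝ)/2) := step2.symm
      _ ≤ r (v n) ^ ((1:ℝ)/2) * ((m n:ℝ)^(3*d) * (b n)^(3:ℕ)) ^ ((1:ℝ)/2) :=
          mul_le_mul_of_nonneg_left step3 (Real.rpow_nonneg (hr_nonneg _) _)
  have hg3 : Tendsto (fun n => r (v n) ^ ((1:ℝ)/2)) atTop (𝓝 0) := by
    have h := hrv.rpow_const (p := (1:ℝ)/2) (Or.inr (by norm_num))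
    rwa [Real.zero_rpow (by norm_num : (1:ℝ)/2 ≠ 0)] at h
  have claim3 : Tendsto (fun n => r (m n) / ((m n : ℝ) ^ d * b n) ^ ((3 : ℝ) / 2))
      atTop (𝓝 0) := by
    refine squeeze_zero (fun n => ?_) hbound3 hg3
    exact div_nonneg (hr_nonneg _)
      (Real.rpow_nonneg (mul_nonneg (pow_nonneg (Nat.cast_nonneg _) d) (hb_pos n).le) _)
  exact ⟨hm_top, claim2, claim3⟩
end

section
/- Let $f$ be a bounded density continuous at distinct points $s \neq t$ of $\mathbb{R}$, and let $K$ be a Lipschitz kernel in $\mathbb{L}^1 \cap \mathbb{L}^2$ with $\int K = 1$. If $b_n \to 0^+$ then $\frac{1}{b_n}\,\mathbb{E}\left[K\left(\frac{s - X_0}{b_n}\right) K\left(\frac{t - X_0}{b_n}\right)\right] = \int_{\mathbb{R}} K(v) K\left(v + \frac{t - s}{b_n}\right) f(s - v b_n)\,dv \to 0$ as $n \to \infty$. -/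
open MeasureTheory Filter
open scoped Topology ENNReal NNReal

private lemma keyIneq (K : ℝ → ℝ) (L : ℝ) (hL : 0 < L)
    (hlip : ∀ p q : ℝ, |K p - K q| ≤ L * |p - q|)
    (hK2 : Integrable (fun u => K u ^ 2))
    (x : ℝ) (S : Set ℝ) (_hS : MeasurableSet S)
    (hsub : Set.Icc (x - |K x| / (2 * L)) (x + |K x| / (2 * L)) ⊆ S) :
    |K x| ^ 3 / (4 * L) ≤ ∫ y in S, K y ^ 2 := by
  set a := |K x| with ha
  have ha0 : 0 ≤ a := abs_nonneg _
  set r := a / (2 * L) with hr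
  have hr0 : 0 ≤ r := div_nonneg ha0 (by positivity)
  have hIcc : ∀ y ∈ Set.Icc (x - r) (x + r), (a / 2) ^ 2 ≤ K y ^ 2 := by
    intro y hy
    have hdist : |x - y| ≤ r := by
      rw [abs_sub_le_iff]
      constructor <;> [linarith [hy.1]; linarith [hy.2]]
    have h1 : a - |K y| ≤ |K x - K y| := by
      have := abs_sub_abs_le_abs_sub (K x) (K y); linarith
    have h2 : |K x - K y| ≤ L * r := by
      refine le_trans (hlip x y) ?_
      exact mul_le_mul_of_nonneg_left hdist hL.le
    have hLr : L * r = a / 2 := by rw [hr]; field_simp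
    have hKy : a / 2 ≤ |K y| := by rw [hLr] at h2; linarith
    calc (a / 2) ^ 2 ≤ |K y| ^ 2 := pow_le_pow_left₀ (by positivity) hKy 2
      _ = K y ^ 2 := sq_abs _
  have hmeas : MeasurableSet (Set.Icc (x - r) (x + r)) := measurableSet_Icc
  have hvol : (volume (Set.Icc (x - r) (x + r))).toReal = 2 * r := by
    rw [Real.volume_Icc, ENNReal.toReal_ofReal (by linarith)]; ring
  have h1 : (a / 2) ^ 2 * (2 * r) ≤ ∫ y in Set.Icc (x - r) (x + r), K y ^ 2 := by
    have := setIntegral_ge_of_const_le hmeas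
      (by rw [Real.volume_Icc]; exact ENNReal.ofReal_ne_top) hIcc hK2.integrableOn
    rw [measureReal_def, hvol, smul_eq_mul] at this; linarith
  have h2 : (∫ y in Set.Icc (x - r) (x + r), K y ^ 2) ≤ ∫ y in S, K y ^ 2 :=
    setIntegral_mono_set hK2.integrableOn (ae_of_all _ fun y => sq_nonneg _)
      (HasSubset.Subset.eventuallyLE hsub)
  have heq : (a / 2) ^ 2 * (2 * r) = a ^ 3 / (4 * L) := by
    rw [hr]; field_simp; ring
  linarith

private lemma Kbdd (K : ℝ → ℝ) (L : ℝ) (hL : 0 < L)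
    (hlip : ∀ p q : ℝ, |K p - K q| ≤ L * |p - q|)
    (hK2 : Integrable (fun u => K u ^ 2)) :
    ∀ x : ℝ, |K x| ≤ max 1 (4 * L * ∫ y, K y ^ 2) := by
  intro x
  have hkey := keyIneq K L hL hlip hK2 x Set.univ MeasurableSet.univ (Set.subset_univ _)
  rw [Measure.restrict_univ] at hkey
  have hcube : |K x| ^ 3 ≤ 4 * L * ∫ y, K y ^ 2 := by
    rw [div_le_iff₀ (by positivity)] at hkey
    calc |K x| ^ 3 ≤ (∫ y, K y ^ 2) * (4 * L) := hkey
      _ = 4 * L * ∫ y, K y ^ 2 := by ring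
  by_contra h
  push_neg at h
  have h1 : (1 : ℝ) < |K x| := lt_of_le_of_lt (le_max_left _ _) h
  have h2 : |K x| ≤ |K x| ^ 3 := le_self_pow₀ h1.le (by norm_num)
  have := lt_of_le_of_lt (le_max_right 1 (4 * L * ∫ y, K y ^ 2)) h
  linarith

private lemma tailZero (g : ℝ → ℝ) (hg : Integrable g) :
    Tendsto (fun n : ℕ => ∫ y in (Set.Icc (-(n : ℝ)) (n : ℝ))ᶜ, g y) atTop (𝓝 0) := by
  have hmono : Monotone fun n : ℕ => Set.Icc (-(n : ℝ)) (n : ℝ) := by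
    intro m n h
    exact Set.Icc_subset_Icc (neg_le_neg (by exact_mod_cast h)) (by exact_mod_cast h)
  have hunion : (⋃ n : ℕ, Set.Icc (-(n : ℝ)) (n : ℝ)) = Set.univ := by
    ext x
    simp only [Set.mem_iUnion, Set.mem_univ, iff_true, Set.mem_Icc]
    obtain ⟨n, hn⟩ := exists_nat_ge |x|
    exact ⟨n, (abs_le.mp hn).1, (abs_le.mp hn).2⟩
  have h1 := tendsto_setIntegral_of_monotone (fun _ : ℕ => measurableSet_Icc) hmono
    (by rw [hunion]; exact hg.integrableOn)
  rw [hunion, Measure.restrict_univ] at h1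
  have h2 : ∀ n : ℕ, (∫ y in (Set.Icc (-(n : ℝ)) (n : ℝ))ᶜ, g y)
      = (∫ y, g y) - ∫ y in Set.Icc (-(n : ℝ)) (n : ℝ), g y := by
    intro n
    have := integral_add_compl (measurableSet_Icc (a := -(n : ℝ)) (b := (n : ℝ))) hg
    linarith
  simp_rw [h2]
  have := (tendsto_const_nhds (x := ∫ y, g y) (f := atTop (α := ℕ))).sub h1
  simpa using this

private lemma Keps (K : ℝ → ℝ) (L : ℝ) (hL : 0 < L)
    (hlip : ∀ p q : ℝ, |K p - K q| ≤ L * |p - q|)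
    (hK2 : Integrable (fun u => K u ^ 2)) :
    ∀ ε > (0 : ℝ), ∃ R : ℝ, ∀ x : ℝ, R ≤ |x| → |K x| < ε := by
  intro ε hε
  set C := max 1 (4 * L * ∫ y, K y ^ 2) with hC
  have hCb : ∀ x, |K x| ≤ C := Kbdd K L hL hlip hK2
  have hC1 : (1 : ℝ) ≤ C := le_max_left _ _
  have hpos : (0 : ℝ) < ε ^ 3 / (4 * L) := by positivity
  have htail := tailZero (fun u => K u ^ 2) hK2
  obtain ⟨N, hN⟩ := eventually_atTop.mp (htail.eventually (gt_mem_nhds hpos))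
  refine ⟨(N : ℝ) + 1 + C / (2 * L), fun x hx => ?_⟩
  have hr0 : |K x| / (2 * L) ≤ C / (2 * L) :=
    div_le_div_of_nonneg_right (hCb x) (by positivity)
  have hsub : Set.Icc (x - |K x| / (2 * L)) (x + |K x| / (2 * L))
      ⊆ (Set.Icc (-(N : ℝ)) (N : ℝ))ᶜ := by
    intro y hy
    simp only [Set.mem_Icc] at hy
    simp only [Set.mem_compl_iff, Set.mem_Icc, not_and_or, not_le]
    rcases le_or_gt 0 x with hx0 | hx0
    · right
      have : x = |x| := (abs_of_nonneg hx0).symm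
      have hxx : (N : ℝ) + 1 + C / (2 * L) ≤ x := by rw [this]; exact hx
      have := hy.1
      have hC2L : 0 < C / (2 * L) := by positivity
      nlinarith [hr0]
    · left
      have : |x| = -x := abs_of_neg hx0
      have hxx : x ≤ -((N : ℝ) + 1 + C / (2 * L)) := by
        rw [this] at hx; linarith
      have := hy.2
      nlinarith [hr0]
  have hkey := keyIneq K L hL hlip hK2 x _ measurableSet_Icc.compl hsub
  have hlt := lt_of_le_of_lt hkey (hN N le_rfl)
  have hcube : |K x| ^ 3 < ε ^ 3 := by
    rw [div_lt_div_iff₀ (by positivity) (by positivity)] at hlt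
    nlinarith [hL]
  calc |K x| = |(|K x|)| := (abs_abs _).symm
    _ < ε := by
      exact lt_of_pow_lt_pow_left₀ 3 hε.le (by rwa [abs_abs])

/-- Cross-term limit at distinct points `s ≠ t` (diagonal covariance structure). -/
theorem stmt12 {Ω : Type*} [MeasurableSpace Ω] (μ : Measure Ω) [IsProbabilityMeasure μ]
    (X : Ω → ℝ) (hX : Measurable X)
    (f : ℝ → ℝ) (hf_meas : Measurable f) (hf_nonneg : ∀ y, 0 ≤ f y)
    (hf_density : Measure.map X μ = volume.withDensity (fun y => ENNReal.ofReal (f y)))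
    (hf_bdd : ∃ M : ℝ, ∀ y, f y ≤ M)
    (s t : ℝ) (hst : s ≠ t) (hf_cont_s : ContinuousAt f s) (hf_cont_t : ContinuousAt f t)
    (K : ℝ → ℝ) (L : NNReal) (hK_lip : LipschitzWith L K)
    (hK_int : Integrable K) (hK2_int : Integrable (fun u => (K u) ^ 2))
    (hK1 : ∫ u, K u = 1)
    (b : ℕ → ℝ) (hb_pos : ∀ n, 0 < b n) (hb_lim : Tendsto b atTop (nhds 0)) :
    (∀ n, (b n)⁻¹ * ∫ ω, K ((s - X ω) / b n) * K ((t - X ω) / b n) ∂μ =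
        ∫ v, K v * K (v + (t - s) / b n) * f (s - v * b n)) ∧
    Tendsto (fun n => (b n)⁻¹ * ∫ ω, K ((s - X ω) / b n) * K ((t - X ω) / b n) ∂μ)
      atTop (nhds 0) := by
  have hlip : ∀ p q : ℝ, |K p - K q| ≤ (L : ℝ) * |p - q| := by
    intro p q
    have := hK_lip.dist_le_mul p q
    simpa [Real.dist_eq] using this
  have hLpos : (0 : ℝ) < (L : ℝ) := by
    rcases eq_or_lt_of_le L.coe_nonneg with h | h
    · exfalso
      have hconst : ∀ p : ℝ, K p = K 0 := by
        intro p
        have h2 := hlip p 0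
        rw [← h, zero_mul] at h2
        have h3 : K p - K 0 = 0 := abs_nonpos_iff.mp h2
        linarith
      have hint : Integrable (fun _ : ℝ => K 0) volume :=
        hK_int.congr (ae_of_all _ fun p => hconst p)
      rw [integrable_const_iff] at hint
      rcases hint with h0 | hfin
      · have : (∫ u, K u) = 0 := by
          rw [integral_congr_ae (ae_of_all _ fun p => (hconst p).trans h0)]
          simp
        rw [hK1] at this; norm_num at this
      · simp [isFiniteMeasure_iff, Real.volume_univ] at hfin
    · exact h
  have hKc : Continuous K := hK_lip.continuous
  have key1 : ∀ n : ℕ, (b n)⁻¹ * ∫ ω, K ((s - X ω) / b n) * K ((t - X ω) / b n) ∂μ =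
      ∫ v, K v * K (v + (t - s) / b n) * f (s - v * b n) := by
    intro n
    set B := b n with hBdef
    have hB : 0 < B := hb_pos n
    have hg_cont : Continuous fun x : ℝ => K ((s - x) / B) * K ((t - x) / B) :=
      (hKc.comp ((continuous_const.sub continuous_id).div_const _)).mul
        (hKc.comp ((continuous_const.sub continuous_id).div_const _))
    have h1 : (∫ ω, K ((s - X ω) / B) * K ((t - X ω) / B) ∂μ)
        = ∫ x, K ((s - x) / B) * K ((t - x) / B) ∂(Measure.map X μ) :=
      (integral_map hX.aemeasurable hg_cont.aestronglyMeasurable).symm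
    have h2 : (∫ x, K ((s - x) / B) * K ((t - x) / B) ∂(Measure.map X μ))
        = ∫ x, f x * (K ((s - x) / B) * K ((t - x) / B)) := by
      rw [hf_density]
      have he : (fun y => ENNReal.ofReal (f y)) = fun y => ((f y).toNNReal : ℝ≥0∞) := rfl
      rw [he, integral_withDensity_eq_integral_smul hf_meas.real_toNNReal]
      refine integral_congr_ae (ae_of_all _ fun x => ?_)
      simp [NNReal.smul_def, Real.coe_toNNReal _ (hf_nonneg x)]
    set G : ℝ → ℝ := fun y => K (y / B) * K ((t - s + y) / B) * f (s - y) with hGdef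
    have h3 : (∫ x, f x * (K ((s - x) / B) * K ((t - x) / B))) = ∫ y, G y := by
      rw [← integral_sub_left_eq_self G volume s]
      refine integral_congr_ae (ae_of_all _ fun x => ?_)
      simp only [hGdef]
      have e1 : t - s + (s - x) = t - x := by ring
      have e2 : s - (s - x) = x := by ring
      rw [e1, e2]; ring
    have h4 : (∫ y, G y) = B * ∫ v, G (B * v) := by
      rw [Measure.integral_comp_mul_left G B, smul_eq_mul, abs_of_pos (inv_pos.mpr hB)]
      field_simp
    have h5 : ∀ v : ℝ, G (B * v) = K v * K (v + (t - s) / B) * f (s - v * B) := by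
      intro v
      simp only [hGdef]
      have e1 : B * v / B = v := mul_div_cancel_left₀ v hB.ne'
      have e2 : (t - s + B * v) / B = v + (t - s) / B := by field_simp; ring
      have e3 : s - B * v = s - v * B := by ring
      rw [e1, e2, e3]
    rw [h1, h2, h3, h4, inv_mul_cancel_left₀ hB.ne']
    exact integral_congr_ae (ae_of_all _ h5)
  refine ⟨key1, ?_⟩
  have hrw : (fun n => (b n)⁻¹ * ∫ ω, K ((s - X ω) / b n) * K ((t - X ω) / b n) ∂μ)
      = fun n => ∫ v, K v * K (v + (t - s) / b n) * f (s - v * b n) := funext key1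
  rw [hrw]
  obtain ⟨M, hM⟩ := hf_bdd
  have hM0 : 0 ≤ M := le_trans (hf_nonneg s) (hM s)
  set C := max 1 (4 * (L : ℝ) * ∫ y, K y ^ 2) with hCdef
  have hCb : ∀ x, |K x| ≤ C := Kbdd K L hLpos hlip hK2_int
  have hC0 : (0 : ℝ) ≤ C := le_trans zero_le_one (le_max_left _ _)
  have heps := Keps K L hLpos hlip hK2_int
  have hKtop : Tendsto K atTop (𝓝 0) := by
    rw [Metric.tendsto_atTop]
    intro ε hε
    obtain ⟨R, hR⟩ := heps ε hε
    refine ⟨max R 0, fun x hx => ?_⟩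
    rw [Real.dist_eq, sub_zero]
    refine hR x ?_
    rw [abs_of_nonneg (le_trans (le_max_right R 0) hx)]
    exact le_trans (le_max_left R 0) hx
  have hKbot : Tendsto K atBot (𝓝 0) := by
    rw [Metric.tendsto_nhds]
    intro ε hε
    obtain ⟨R, hR⟩ := heps ε hε
    rw [eventually_atBot]
    refine ⟨-(max R 0), fun x hx => ?_⟩
    rw [Real.dist_eq, sub_zero]
    refine hR x ?_
    have hx0 : x ≤ 0 := le_trans hx (neg_nonpos.mpr (le_max_right R 0))
    rw [abs_of_nonpos hx0]
    linarith [le_max_left R 0]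
  have hbinv : Tendsto (fun n => (b n)⁻¹) atTop atTop := by
    have hb' : Tendsto b atTop (nhdsWithin 0 (Set.Ioi 0)) :=
      tendsto_nhdsWithin_of_tendsto_nhds_of_eventually_within b hb_lim
        (Eventually.of_forall fun n => hb_pos n)
    exact tendsto_inv_nhdsGT_zero.comp hb'
  have hptwise : ∀ v : ℝ,
      Tendsto (fun n => K v * K (v + (t - s) / b n) * f (s - v * b n)) atTop (𝓝 0) := by
    intro v
    have harg : Tendsto (fun n => s - v * b n) atTop (𝓝 s) := by
      have := (hb_lim.const_mul v).const_sub s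
      simpa using this
    have hf_lim : Tendsto (fun n => f (s - v * b n)) atTop (𝓝 (f s)) :=
      hf_cont_s.tendsto.comp harg
    have hKmid : Tendsto (fun n => K (v + (t - s) / b n)) atTop (𝓝 0) := by
      rcases (sub_ne_zero.mpr (Ne.symm hst)).lt_or_gt with hts | hts
      · have h1 : Tendsto (fun n => (t - s) / b n) atTop atBot := by
          simp_rw [div_eq_mul_inv]
          exact Tendsto.const_mul_atTop_of_neg hts hbinv
        exact hKbot.comp (tendsto_atBot_add_const_left _ v h1)
      · have h1 : Tendsto (fun n => (t - s) / b n) atTop atTop := by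
          simp_rw [div_eq_mul_inv]
          exact Tendsto.const_mul_atTop hts hbinv
        exact hKtop.comp (tendsto_atTop_add_const_left _ v h1)
    have := ((tendsto_const_nhds (x := K v) (f := atTop (α := ℕ))).mul hKmid).mul hf_lim
    simpa using this
  have hFmeas : ∀ n : ℕ, AEStronglyMeasurable
      (fun v => K v * K (v + (t - s) / b n) * f (s - v * b n)) volume := by
    intro n
    exact ((hKc.measurable.mul
      (hKc.measurable.comp (measurable_id.add_const _))).mul
      (hf_meas.comp (measurable_const.sub (measurable_id.mul_const _)))).aestronglyMeasurable
  have hbint : Integrable (fun v : ℝ => C * M * |K v|) volume :=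
    (hK_int.abs).const_mul (C * M)
  have hbd : ∀ n : ℕ, ∀ᵐ v ∂(volume : Measure ℝ),
      ‖K v * K (v + (t - s) / b n) * f (s - v * b n)‖ ≤ C * M * |K v| := by
    intro n
    refine ae_of_all _ fun v => ?_
    rw [Real.norm_eq_abs, abs_mul, abs_mul]
    have h1 : |K v| * |K (v + (t - s) / b n)| ≤ |K v| * C :=
      mul_le_mul_of_nonneg_left (hCb _) (abs_nonneg _)
    have h2 : |f (s - v * b n)| ≤ M := by
      rw [abs_of_nonneg (hf_nonneg _)]; exact hM _
    calc |K v| * |K (v + (t - s) / b n)| * |f (s - v * b n)|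
        ≤ |K v| * C * M := by
          apply mul_le_mul h1 h2 (abs_nonneg _)
          positivity
      _ = C * M * |K v| := by ring
  have hDCT := tendsto_integral_of_dominated_convergence (μ := (volume : Measure ℝ))
      (F := fun n v => K v * K (v + (t - s) / b n) * f (s - v * b n))
      (f := fun _ => (0 : ℝ)) (fun v => C * M * |K v|) hFmeas hbint hbd
      (ae_of_all _ hptwise)
  simpa using hDCT
end
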